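/- arXiv:1111.3280 — 4 statements merged into one kernel-verified Lean document; each statement's English description precedes it below -/
import Mathlib

section
/- Let g be a finite-dimensional real nilpotent Lie algebra admitting a symplectic form ω (a closed, nondegenerate 2-form, where closedness means ω([x,y],z) + ω([y,z],x) + ω([z,x],y) = 0 for all x,y,z). Then dim z(g) ≤ dim(g/[g,g]), where z(g) is the center of g. -/
theorem stmt_0 (g : Type*) [LieRing g] [LieAlgebra ℝ g]
    [Module.Finite ℝ g] [LieModule.IsNilpotent g g]
    (ω : LinearMap.BilinForm ℝ g) (halt : ω.IsAlt) (hnd : ω.Nondegenerate)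
    (hclosed : ∀ x y z : g, ω ⁅x, y⁆ z + ω ⁅y, z⁆ x + ω ⁅z, x⁆ y = 0) :
    Module.finrank ℝ (LieAlgebra.center ℝ g) ≤
      Module.finrank ℝ
        (g ⧸ (LieSubmodule.toSubmodule ⁅(⊤ : LieIdeal ℝ g), (⊤ : LieIdeal ℝ g)⁆)) := by
  set C : Submodule ℝ g := LieSubmodule.toSubmodule ⁅(⊤ : LieIdeal ℝ g), (⊤ : LieIdeal ℝ g)⁆
  have hrefl : ω.IsRefl := halt.isRefl
  have hle : (LieAlgebra.center ℝ g).toSubmodule ≤ ω.orthogonal C := by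
    intro z hz
    intro c hc
    show ω c z = 0
    rw [show C = LieSubmodule.toSubmodule ⁅(⊤ : LieIdeal ℝ g), (⊤ : LieIdeal ℝ g)⁆ from rfl,
      LieSubmodule.lieIdeal_oper_eq_linear_span'] at hc
    induction hc using Submodule.span_induction with
    | mem c hc =>
      obtain ⟨x, -, y, -, rfl⟩ := hc
      have h1 : ⁅y, z⁆ = 0 := hz y
      have h2 : ⁅z, x⁆ = 0 := by
        have := hz x
        rw [← lie_skew] at this
        simpa using neg_eq_zero.mp (by rw [lie_skew]; simpa using this)
      have := hclosed x y z
      rw [h1, h2] at this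
      simpa using this
    | zero => simp
    | add a b _ _ ha hb => simp [ha, hb]
    | smul r a _ ha => simp [ha]
  have h1 : Module.finrank ℝ (LieAlgebra.center ℝ g) ≤ Module.finrank ℝ (ω.orthogonal C) :=
    Submodule.finrank_mono hle
  have h2 : Module.finrank ℝ (ω.orthogonal C) = Module.finrank ℝ g - Module.finrank ℝ C :=
    LinearMap.BilinForm.finrank_orthogonal hnd C
  have h3 : Module.finrank ℝ (g ⧸ C) + Module.finrank ℝ C = Module.finrank ℝ g :=
    Submodule.finrank_quotient_add_finrank C
  omega
end

section
/- The 6-dimensional real Lie algebra g with basis e₁,…,e₆ and nonzero brackets [e₁,e₂]=e₃, [e₁,e₃]=e₄, [e₂,e₃]=e₅ admits no symplectic structure: every alternating bilinear form ω on g satisfying ω([x,y],z) + ω([y,z],x) + ω([z,x],y) = 0 for all x,y,z is degenerate. -/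
theorem stmt_6 (g : Type*) [LieRing g] [LieAlgebra ℝ g]
    (b : Module.Basis (Fin 6) ℝ g)
    (h12 : ⁅b 0, b 1⁆ = b 2) (h13 : ⁅b 0, b 2⁆ = b 3) (h23 : ⁅b 1, b 2⁆ = b 4)
    (hzero : ∀ i j : Fin 6,
      ((i, j) : Fin 6 × Fin 6) ∉
        ({(0, 1), (1, 0), (0, 2), (2, 0), (1, 2), (2, 1)} : Set (Fin 6 × Fin 6)) →
      ⁅b i, b j⁆ = 0) :
    ∀ ω : LinearMap.BilinForm ℝ g, ω.IsAlt →
      (∀ x y z : g, ω ⁅x, y⁆ z + ω ⁅y, z⁆ x + ω ⁅z, x⁆ y = 0) →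
      ¬ ω.Nondegenerate := by
  intro ω halt hc hnd
  -- central basis vectors: for z ∈ {3,4,5}, ω ⁅x,y⁆ z = 0 when x,y basis vectors
  have key : ∀ (i j k : Fin 6), ((j, k) : Fin 6 × Fin 6) ∉
        ({(0, 1), (1, 0), (0, 2), (2, 0), (1, 2), (2, 1)} : Set (Fin 6 × Fin 6)) →
      ((k, i) : Fin 6 × Fin 6) ∉
        ({(0, 1), (1, 0), (0, 2), (2, 0), (1, 2), (2, 1)} : Set (Fin 6 × Fin 6)) →
      ω ⁅b i, b j⁆ (b k) = 0 := by
    intro i j k h1 h2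
    have := hc (b i) (b j) (b k)
    rw [hzero j k h1, hzero k i h2] at this
    simpa using this
  have z23 : ω (b 2) (b 3) = 0 := by have := key 0 1 3 (by simp) (by simp); rwa [h12] at this
  have z24 : ω (b 2) (b 4) = 0 := by have := key 0 1 4 (by simp) (by simp); rwa [h12] at this
  have z25 : ω (b 2) (b 5) = 0 := by have := key 0 1 5 (by simp) (by simp); rwa [h12] at this
  have z33 : ω (b 3) (b 3) = 0 := halt _
  have z34 : ω (b 3) (b 4) = 0 := by have := key 0 2 4 (by simp) (by simp); rwa [h13] at this
  have z35 : ω (b 3) (b 5) = 0 := by have := key 0 2 5 (by simp) (by simp); rwa [h13] at this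
  have z43 : ω (b 4) (b 3) = 0 := by rw [← halt.neg_eq, z34, neg_zero]
  have z44 : ω (b 4) (b 4) = 0 := halt _
  have z45 : ω (b 4) (b 5) = 0 := by have := key 1 2 5 (by simp) (by simp); rwa [h23] at this
  have z32 : ω (b 3) (b 2) = 0 := by rw [← halt.neg_eq, z23, neg_zero]
  have z42 : ω (b 4) (b 2) = 0 := by rw [← halt.neg_eq, z24, neg_zero]
  have z52 : ω (b 5) (b 2) = 0 := by rw [← halt.neg_eq, z25, neg_zero]
  have z53 : ω (b 5) (b 3) = 0 := by rw [← halt.neg_eq, z35, neg_zero]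
  have z54 : ω (b 5) (b 4) = 0 := by rw [← halt.neg_eq, z45, neg_zero]
  have z55 : ω (b 5) (b 5) = 0 := halt _
  -- the 2×3 matrix of remaining pairings has nontrivial kernel
  set M : Matrix (Fin 2) (Fin 3) ℝ :=
    !![ω (b 3) (b 0), ω (b 4) (b 0), ω (b 5) (b 0);
       ω (b 3) (b 1), ω (b 4) (b 1), ω (b 5) (b 1)] with hM
  have hker : LinearMap.ker M.mulVecLin ≠ ⊥ := by
    intro h
    have hinj : Function.Injective M.mulVecLin := LinearMap.ker_eq_bot.mp h
    have := LinearMap.finrank_le_finrank_of_injective hinj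
    simp [Module.finrank_fin_fun] at this
  obtain ⟨x, hxmem, hx0⟩ := Submodule.exists_mem_ne_zero_of_ne_bot hker
  have hx : M.mulVec x = 0 := hxmem
  have e0 : ω (b 3) (b 0) * x 0 + ω (b 4) (b 0) * x 1 + ω (b 5) (b 0) * x 2 = 0 := by
    have := congrFun hx 0
    simpa [hM, Matrix.mulVec, dotProduct, Fin.sum_univ_three] using this
  have e1 : ω (b 3) (b 1) * x 0 + ω (b 4) (b 1) * x 1 + ω (b 5) (b 1) * x 2 = 0 := by
    have := congrFun hx 1
    simpa [hM, Matrix.mulVec, dotProduct, Fin.sum_univ_three] using this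
  set v : g := x 0 • b 3 + x 1 • b 4 + x 2 • b 5 with hv
  have hωv : ω v = 0 := by
    apply b.ext
    intro j
    fin_cases j <;>
      simp [hv, map_add, map_smul, LinearMap.add_apply, LinearMap.smul_apply, smul_eq_mul,
        z32, z33, z34, z35, z42, z43, z44, z45, z52, z53, z54, z55] <;>
      linarith [e0, e1]
  have hv0 : v = 0 := hnd.1 v fun n => by rw [hωv]; rfl
  apply hx0
  have hr : b.repr v = 0 := by rw [hv0, map_zero]
  funext i
  fin_cases i
  · have := congrFun (congrArg (fun f : Fin 6 →₀ ℝ => (f : Fin 6 → ℝ)) hr) 3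
    simpa [hv, Module.Basis.repr_self, Finsupp.single_apply] using this
  · have := congrFun (congrArg (fun f : Fin 6 →₀ ℝ => (f : Fin 6 → ℝ)) hr) 4
    simpa [hv, Module.Basis.repr_self, Finsupp.single_apply] using this
  · have := congrFun (congrArg (fun f : Fin 6 →₀ ℝ => (f : Fin 6 → ℝ)) hr) 5
    simpa [hv, Module.Basis.repr_self, Finsupp.single_apply] using this
end

section
/- Let g be a finite-dimensional real nilpotent Lie algebra with dim z(g) > dim(g/[g,g]). Then g admits no symplectic structure, i.e., there is no nondegenerate alternating bilinear form ω on g with ω([x,y],z) + ω([y,z],x) + ω([z,x],y) = 0 for all x,y,z. -/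
theorem stmt_18 (g : Type*) [LieRing g] [LieAlgebra ℝ g]
    [Module.Finite ℝ g] [LieRing.IsNilpotent g]
    (h : Module.finrank ℝ (LieAlgebra.center ℝ g) >
      Module.finrank ℝ
        (g ⧸ LieSubmodule.toSubmodule
          (⁅(⊤ : LieIdeal ℝ g), (⊤ : LieIdeal ℝ g)⁆ : LieIdeal ℝ g))) :
    ¬ ∃ ω : LinearMap.BilinForm ℝ g, ω.IsAlt ∧ ω.Nondegenerate ∧
        ∀ x y z : g, ω ⁅x, y⁆ z + ω ⁅y, z⁆ x + ω ⁅z, x⁆ y = 0 := by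
  rintro ⟨ω, halt, hnd, hJ⟩
  set D : Submodule ℝ g := LieSubmodule.toSubmodule
      (⁅(⊤ : LieIdeal ℝ g), (⊤ : LieIdeal ℝ g)⁆ : LieIdeal ℝ g) with hD
  -- For z central, ω(⁅x,y⁆, z) = 0, so ω.flip z kills D
  have hzero : ∀ z : LieAlgebra.center ℝ g, ∀ x y : g, ω ⁅x, y⁆ (z : g) = 0 := by
    intro z x y
    have hy : ⁅y, (z : g)⁆ = 0 := by
      have := z.2 y; simpa using this
    have hx : ⁅(z : g), x⁆ = 0 := by
      have := z.2 x
      rw [← lie_skew]; simp [this]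
    have := hJ x y z
    rw [hy, hx] at this
    simpa using this
  have hle : ∀ z : LieAlgebra.center ℝ g, D ≤ LinearMap.ker (ω.flip (z : g)) := by
    intro z
    rw [hD, LieSubmodule.lieIdeal_oper_eq_linear_span]
    rw [Submodule.span_le]
    rintro m ⟨x, y, rfl⟩
    simp [hzero z x y]
  -- the linear map center → Dual (g ⧸ D)
  let F : (LieAlgebra.center ℝ g) →ₗ[ℝ] Module.Dual ℝ (g ⧸ D) :=
    { toFun := fun z => D.liftQ (ω.flip (z : g)) (hle z)
      map_add' := by
        intro a b
        apply LinearMap.ext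
        intro q
        obtain ⟨x, rfl⟩ := Submodule.Quotient.mk_surjective _ q
        simp [Submodule.liftQ_apply]
      map_smul' := by
        intro c a
        apply LinearMap.ext
        intro q
        obtain ⟨x, rfl⟩ := Submodule.Quotient.mk_surjective _ q
        simp [Submodule.liftQ_apply] }
  have hFinj : Function.Injective F := by
    rw [← LinearMap.ker_eq_bot, eq_bot_iff]
    intro z hz
    have hz' : ∀ x : g, ω x (z : g) = 0 := by
      intro x
      have := LinearMap.congr_fun (LinearMap.mem_ker.mp hz) (Submodule.Quotient.mk x)
      simpa [F, Submodule.liftQ_apply] using this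
    have : ∀ x : g, ω (z : g) x = 0 := by
      intro x
      have := LinearMap.IsAlt.neg halt x (z : g)
      rw [hz' x] at this
      simpa using this.symm
    have : (z : g) = 0 := hnd.1 _ this
    simpa [Submodule.mem_bot] using Subtype.ext this
  have h1 : Module.finrank ℝ (LieAlgebra.center ℝ g) ≤
      Module.finrank ℝ (Module.Dual ℝ (g ⧸ D)) :=
    LinearMap.finrank_le_finrank_of_injective hFinj
  rw [Subspace.dual_finrank_eq] at h1
  omega
end

section
/- Let g be the 10-dimensional real Lie algebra with basis e₁,…,e₁₀, where e₁,…,e₄ are generators, e₅=[e₂,e₁], e₆=[e₃,e₁], e₇=[e₃,e₂], e₈=[e₄,e₁], e₉=[e₄,e₂], e₁₀=[e₄,e₃] and all brackets of two elements among e₅,…,e₁₀, or of a generator with an element of e₅,…,e₁₀, vanish. Then g admits no symplectic structure: every alternating bilinear form ω satisfying ω([x,y],z)+ω([y,z],x)+ω([z,x],y)=0 for all x,y,z is degenerate. -/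
theorem stmt_19 (g : Type*) [LieRing g] [LieAlgebra ℝ g]
    (b : Module.Basis (Fin 10) ℝ g)
    (h21 : ⁅b 1, b 0⁆ = b 4) (h31 : ⁅b 2, b 0⁆ = b 5) (h32 : ⁅b 2, b 1⁆ = b 6)
    (h41 : ⁅b 3, b 0⁆ = b 7) (h42 : ⁅b 3, b 1⁆ = b 8) (h43 : ⁅b 3, b 2⁆ = b 9)
    (hzero : ∀ i j : Fin 10,
      ((i, j) : Fin 10 × Fin 10) ∉
        ({(0, 1), (1, 0), (0, 2), (2, 0), (0, 3), (3, 0),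
          (1, 2), (2, 1), (1, 3), (3, 1), (2, 3), (3, 2)} : Set (Fin 10 × Fin 10)) →
      ⁅b i, b j⁆ = 0) :
    ∀ ω : LinearMap.BilinForm ℝ g, ω.IsAlt →
      (∀ x y z : g, ω ⁅x, y⁆ z + ω ⁅y, z⁆ x + ω ⁅z, x⁆ y = 0) →
      ¬ ω.Nondegenerate := by
  intro ω halt hcl hnd
  -- centrality of b j for j ≥ 4
  have hcent : ∀ (k j : Fin 10), 4 ≤ (j : ℕ) → ⁅b k, b j⁆ = 0 := by
    intro k j hj
    apply hzero
    simp only [Set.mem_insert_iff, Set.mem_singleton_iff, Prod.mk.injEq, not_or]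
    refine ⟨?_, ?_, ?_, ?_, ?_, ?_, ?_, ?_, ?_, ?_, ?_, ?_⟩ <;>
      rintro ⟨-, rfl⟩ <;> revert hj <;> decide
  have hcent' : ∀ (k j : Fin 10), 4 ≤ (j : ℕ) → ⁅b j, b k⁆ = 0 := by
    intro k j hj
    apply hzero
    simp only [Set.mem_insert_iff, Set.mem_singleton_iff, Prod.mk.injEq, not_or]
    refine ⟨?_, ?_, ?_, ?_, ?_, ?_, ?_, ?_, ?_, ?_, ?_, ?_⟩ <;>
      rintro ⟨rfl, -⟩ <;> revert hj <;> decide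
  -- ω vanishes on the center pairs
  have L : ∀ i j : Fin 10, 4 ≤ (i : ℕ) → 4 ≤ (j : ℕ) → ω (b i) (b j) = 0 := by
    intro i j hi hj
    have key : ∀ p q : Fin 10, ⁅b p, b q⁆ = b i → ω (b i) (b j) = 0 := by
      intro p q hpq
      have h := hcl (b p) (b q) (b j)
      rw [hpq, hcent q j hj, hcent' p j hj] at h
      simpa using h
    have hv : (i : ℕ) = 4 ∨ (i : ℕ) = 5 ∨ (i : ℕ) = 6 ∨ (i : ℕ) = 7 ∨ (i : ℕ) = 8 ∨
        (i : ℕ) = 9 := by omega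
    rcases hv with h | h | h | h | h | h
    · exact key 1 0 (by rw [h21]; congr 1; exact Fin.ext (by simp [h]))
    · exact key 2 0 (by rw [h31]; congr 1; exact Fin.ext (by simp [h]))
    · exact key 2 1 (by rw [h32]; congr 1; exact Fin.ext (by simp [h]))
    · exact key 3 0 (by rw [h41]; congr 1; exact Fin.ext (by simp [h]))
    · exact key 3 1 (by rw [h42]; congr 1; exact Fin.ext (by simp [h]))
    · exact key 3 2 (by rw [h43]; congr 1; exact Fin.ext (by simp [h]))
  set m : Fin 6 → Fin 10 := fun j => ⟨(j : ℕ) + 4, by omega⟩ with hm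
  have hmval : ∀ j : Fin 6, 4 ≤ ((m j : Fin 10) : ℕ) := fun j => by simp [hm]
  -- Z c = ∑ c j • b (m j)
  set Z : (Fin 6 → ℝ) →ₗ[ℝ] g :=
    ∑ j : Fin 6, LinearMap.smulRight (LinearMap.proj j) (b (m j)) with hZ
  have hZapp : ∀ c : Fin 6 → ℝ, Z c = ∑ j : Fin 6, c j • b (m j) := by
    intro c; simp [hZ]
  set F : (Fin 6 → ℝ) →ₗ[ℝ] (Fin 4 → ℝ) :=
    LinearMap.pi (fun i : Fin 4 => (ω.flip (b ⟨(i : ℕ), by omega⟩)).comp Z) with hF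
  have hninj : ¬ Function.Injective F := by
    intro hinj
    have h1 := LinearMap.finrank_le_finrank_of_injective hinj
    simp [Module.finrank_fin_fun] at h1
  rw [Function.not_injective_iff] at hninj
  obtain ⟨a, a', hFa, hne⟩ := hninj
  set c : Fin 6 → ℝ := a - a' with hc
  have hc0 : c ≠ 0 := sub_ne_zero.mpr hne
  have hFc : F c = 0 := by rw [hc, map_sub, hFa, sub_self]
  set z : g := Z c with hz
  -- coordinates of z
  have hcoord : ∀ j0 : Fin 6, b.repr z (m j0) = c j0 := by
    intro j0
    rw [hz, hZapp]
    rw [map_sum]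
    rw [Finset.sum_apply']
    rw [Finset.sum_eq_single j0]
    · simp
    · intro j _ hjne
      have : m j ≠ m j0 := by
        intro h; apply hjne; exact Fin.ext (by
          have := congrArg Fin.val h; simpa [hm] using this)
      simp [Finsupp.single_apply, this]
    · simp
  have hz0 : z ≠ 0 := by
    intro h
    apply hc0
    funext j
    have := hcoord j
    rw [h] at this
    simpa using this.symm
  -- ω z vanishes on all basis vectors
  have hωz : ∀ i : Fin 10, ω z (b i) = 0 := by
    intro i
    by_cases hi : (i : ℕ) < 4
    · have h := congrFun hFc ⟨(i : ℕ), hi⟩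
      simp only [hF, LinearMap.pi_apply, LinearMap.comp_apply, LinearMap.flip_apply,
        Pi.zero_apply] at h
      have : (⟨((⟨(i : ℕ), hi⟩ : Fin 4) : ℕ), by omega⟩ : Fin 10) = i := Fin.ext rfl
      rw [this] at h
      exact h
    · rw [hz, hZapp, map_sum]
      rw [LinearMap.sum_apply]
      apply Finset.sum_eq_zero
      intro j _
      rw [map_smul]
      simp [L (m j) i (hmval j) (by omega)]
  have hωz' : ∀ n : g, ω z n = 0 := by
    intro n
    have : (ω z : g →ₗ[ℝ] ℝ) = 0 := b.ext fun i => by simpa using hωz i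
    rw [this]; rfl
  exact hz0 (hnd.1 z hωz')
end
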